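/- Let n ≥ 3 be an integer and A an infinite integral domain of finite Krull dimension whose Jacobson radical is trivial. Let 𝔮 ◁ A be a maximal ideal and let e₁, …, e_n be the standard basis of Aⁿ. Let β ∈ SL_n(A) be a matrix that is congruent to the elementary matrix e_{2,1} modulo 𝔮 (entrywise). Then there exists γ ∈ SL_n(A) which fixes the vectors e₁ and β·e₁ and is congruent to e_{1,3} modulo 𝔮. -/

import Mathlib

/-- The elementary matrix `e_{i,j}(a) ∈ SL_n(A)`: ones on the diagonal, `a` in the `(i,j)`
entry (for `i ≠ j`), zeros elsewhere. -/
def elemSL {n : ℕ} {A : Type*} [CommRing A] (i j : Fin n) (hij : i ≠ j) (a : A) :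
    Matrix.SpecialLinearGroup (Fin n) A :=
  ⟨Matrix.transvection i j a, Matrix.det_transvection_of_ne i j hij a⟩

lemma std_mulVec {n : ℕ} {A : Type*} [CommRing A] (i j : Fin n) (a : A) (v : Fin n → A) :
    (Matrix.single i j a).mulVec v = Pi.single i (a * v j) := by
  ext k
  simp only [Matrix.mulVec, dotProduct, Matrix.single, Matrix.of_apply,
    Pi.single_apply, ite_mul, zero_mul, ite_and]
  by_cases h : i = k
  · subst h
    rw [if_pos rfl, Finset.sum_congr rfl (fun x _ => if_pos rfl)]
    simp [Finset.sum_ite_eq' Finset.univ j (fun x => a * v x)]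
  · rw [if_neg (fun hh => h hh.symm), Finset.sum_eq_zero]
    intro x _
    rw [if_neg h]

/-- Lemma A.2: if `β ∈ SL_n(A)` is congruent to `e_{2,1}` modulo a maximal ideal `𝔮`, then
there is `γ ∈ SL_n(A)` fixing `e₁` and `β e₁` which is congruent to `e_{1,3}` mod `𝔮`. -/
theorem exists_fixing_congruent_e13 (n : ℕ) (hn : 3 ≤ n)
    (A : Type*) [CommRing A] [IsDomain A] [Infinite A]
    (hdim : ringKrullDim A ≠ ⊤)
    (hjac : Ideal.jacobson (⊥ : Ideal A) = ⊥)
    (𝔮 : Ideal A) (hq : 𝔮.IsMaximal)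
    (β : Matrix.SpecialLinearGroup (Fin n) A)
    (hβ : ∀ i j, (β : Matrix (Fin n) (Fin n) A) i j
      - ((elemSL (⟨1, by omega⟩ : Fin n) (⟨0, by omega⟩ : Fin n) (by simp [Fin.ext_iff]) (1 : A) :
          Matrix.SpecialLinearGroup (Fin n) A) : Matrix (Fin n) (Fin n) A) i j ∈ 𝔮) :
    ∃ γ : Matrix.SpecialLinearGroup (Fin n) A,
      (γ : Matrix (Fin n) (Fin n) A).mulVec (Pi.single (⟨0, by omega⟩ : Fin n) 1)
        = Pi.single (⟨0, by omega⟩ : Fin n) 1 ∧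
      (γ : Matrix (Fin n) (Fin n) A).mulVec
          ((β : Matrix (Fin n) (Fin n) A).mulVec (Pi.single (⟨0, by omega⟩ : Fin n) 1))
        = (β : Matrix (Fin n) (Fin n) A).mulVec (Pi.single (⟨0, by omega⟩ : Fin n) 1) ∧
      ∀ i j, (γ : Matrix (Fin n) (Fin n) A) i j
        - ((elemSL (⟨0, by omega⟩ : Fin n) (⟨2, by omega⟩ : Fin n) (by simp [Fin.ext_iff]) (1 : A) :
            Matrix.SpecialLinearGroup (Fin n) A) : Matrix (Fin n) (Fin n) A) i j ∈ 𝔮 := by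
  set i0 : Fin n := ⟨0, by omega⟩ with hi0
  set i1 : Fin n := ⟨1, by omega⟩ with hi1
  set i2 : Fin n := ⟨2, by omega⟩ with hi2
  have h01 : i0 ≠ i1 := by simp [hi0, hi1, Fin.ext_iff]
  have h02 : i0 ≠ i2 := by simp [hi0, hi2, Fin.ext_iff]
  have h12 : i1 ≠ i2 := by simp [hi1, hi2, Fin.ext_iff]
  set a : A := -((β : Matrix (Fin n) (Fin n) A) i2 i0) with ha
  set b : A := (β : Matrix (Fin n) (Fin n) A) i1 i0 with hb
  have hmat : ((elemSL i0 i1 h01 a * elemSL i0 i2 h02 b :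
      Matrix.SpecialLinearGroup (Fin n) A) : Matrix (Fin n) (Fin n) A)
      = 1 + Matrix.single i0 i1 a + Matrix.single i0 i2 b := by
    rw [Matrix.SpecialLinearGroup.coe_mul]
    show (Matrix.transvection i0 i1 a) * (Matrix.transvection i0 i2 b) = _
    unfold Matrix.transvection
    rw [add_mul, mul_add, mul_add, one_mul,
      Matrix.single_mul_single_of_ne (h := Ne.symm h01), mul_one]
    simp only [one_mul, mul_one]
    abel
  have haq : a ∈ 𝔮 := by
    have h := hβ i2 i0
    have : ((elemSL i1 i0 (Ne.symm h01) (1 : A) :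
        Matrix.SpecialLinearGroup (Fin n) A) : Matrix (Fin n) (Fin n) A) i2 i0 = 0 := by
      show Matrix.transvection i1 i0 1 i2 i0 = 0
      unfold Matrix.transvection
      simp [Matrix.one_apply, Matrix.single_apply_of_ne, (Ne.symm h02),
        Matrix.single, (Ne.symm h12), h12]
    rw [this, sub_zero] at h
    exact neg_mem h
  have hbq : b - 1 ∈ 𝔮 := by
    have h := hβ i1 i0
    have : ((elemSL i1 i0 (Ne.symm h01) (1 : A) :
        Matrix.SpecialLinearGroup (Fin n) A) : Matrix (Fin n) (Fin n) A) i1 i0 = 1 := by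
      show Matrix.transvection i1 i0 1 i1 i0 = 1
      unfold Matrix.transvection
      simp [Matrix.one_apply, Ne.symm h01, Matrix.single]
    rwa [this] at h
  refine ⟨elemSL i0 i1 h01 a * elemSL i0 i2 h02 b, ?_, ?_, ?_⟩
  · rw [hmat, Matrix.add_mulVec, Matrix.add_mulVec, Matrix.one_mulVec, std_mulVec, std_mulVec]
    rw [← hi0]
    simp [Pi.single_eq_of_ne (Ne.symm h01), Pi.single_eq_of_ne (Ne.symm h02)]
  · rw [hmat, Matrix.add_mulVec, Matrix.add_mulVec, Matrix.one_mulVec, std_mulVec, std_mulVec]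
    have hv1 : (β : Matrix (Fin n) (Fin n) A).mulVec (Pi.single i0 1) i1 = b := by
      simp [Matrix.mulVec_single, hb]
    have hv2 : (β : Matrix (Fin n) (Fin n) A).mulVec (Pi.single i0 1) i2 = -a := by
      simp [Matrix.mulVec_single, ha]
    rw [hv1, hv2, add_assoc, ← Pi.single_add]
    have : a * b + b * -a = 0 := by ring
    rw [this, Pi.single_zero, add_zero]
  · intro k l
    rw [hmat]
    have hS : ((elemSL i0 i2 h02 (1 : A) :
        Matrix.SpecialLinearGroup (Fin n) A) : Matrix (Fin n) (Fin n) A)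
        = 1 + Matrix.single i0 i2 (1 : A) := rfl
    rw [hS]
    simp only [Matrix.add_apply]
    have : (1 : Matrix (Fin n) (Fin n) A) k l + Matrix.single i0 i1 a k l
        + Matrix.single i0 i2 b k l
        - ((1 : Matrix (Fin n) (Fin n) A) k l + Matrix.single i0 i2 (1 : A) k l)
        = Matrix.single i0 i1 a k l
          + (Matrix.single i0 i2 b k l - Matrix.single i0 i2 (1 : A) k l) := by
      ring
    rw [this]
    refine Ideal.add_mem _ ?_ ?_
    · unfold Matrix.single
      simp only [Matrix.of_apply]
      split_ifs with h
      · exact haq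
      · exact Ideal.zero_mem _
    · unfold Matrix.single
      simp only [Matrix.of_apply]
      split_ifs with h
      · exact hbq
      · simp
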